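/- Let A be a finite-dimensional n-Lie superalgebra. Then the Frattini subalgebra F(A) (the intersection of all maximal subalgebras of A) is contained in the derived subalgebra A^2 = [A,A,...,A]. In particular, if A is abelian then F(A) = 0. -/

import Mathlib

/-- The sign `(-1)^t` for a parity `t ∈ ℤ/2`, as an element of the field `F`. -/
def superSgn (F : Type*) [Field F] (t : ZMod 2) : F := if t = 0 then 1 else -1

/-- An `n`-Lie superalgebra of parity `α` over a field `F`: a `ℤ/2`-graded vector space `A`
with an `n`-linear bracket which is homogeneous of degree `α`, skew-supersymmetric, and
satisfies the super Filippov–Jacobi identity (every left multiplication operator is a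
superderivation). -/
structure NLieSuper (F : Type*) (A : Type*) [Field F] [AddCommGroup A] [Module F A]
    (n : ℕ) (α : ZMod 2) where
  bracket : MultilinearMap F (fun _ : Fin n => A) A
  grading : ZMod 2 → Submodule F A
  internal : DirectSum.IsInternal grading
  bracket_grade : ∀ (x : Fin n → A) (g : Fin n → ZMod 2),
    (∀ i, x i ∈ grading (g i)) → bracket x ∈ grading (α + ∑ i, g i)
  skew : ∀ (x : Fin n → A) (g : Fin n → ZMod 2), (∀ i, x i ∈ grading (g i)) →
    ∀ i j : Fin n, (i : ℕ) + 1 = (j : ℕ) →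
      bracket (x ∘ Equiv.swap i j) = - (superSgn F (g i * g j)) • bracket x
  jacobi : ∀ (a : Fin n → A) (ga : Fin n → ZMod 2), (∀ l, a l ∈ grading (ga l)) →
    ∀ (b : Fin n → A) (gb : Fin n → ZMod 2), (∀ l, b l ∈ grading (gb l)) →
    ∀ i : Fin n,
      bracket (Function.update a i (bracket b)) =
      ∑ j : Fin n,
        (superSgn F ((∑ l ∈ Finset.univ.erase i, ga l) *
            (α + ∑ l ∈ Finset.univ.filter (fun l => l < j), gb l))) •
          bracket (Function.update b j (bracket (Function.update a i (b j))))

namespace NLieSuper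

variable {F A : Type*} [Field F] [AddCommGroup A] [Module F A] {n : ℕ} {α : ZMod 2}

/-- A graded subspace (`vector superspace`): `S = (S ⊓ A₀) ⊕ (S ⊓ A₁)`. -/
def IsGraded (L : NLieSuper F A n α) (S : Submodule F A) : Prop :=
  S ≤ (S ⊓ L.grading 0) ⊔ (S ⊓ L.grading 1)

/-- A subalgebra: a graded subspace closed under the bracket. -/
def IsSubalgebra (L : NLieSuper F A n α) (S : Submodule F A) : Prop :=
  L.IsGraded S ∧ ∀ x : Fin n → A, (∀ i, x i ∈ S) → L.bracket x ∈ S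

/-- An ideal: a graded subspace `I` with `[A,…,A,I] ⊆ I`. -/
def IsIdeal (L : NLieSuper F A n α) (S : Submodule F A) : Prop :=
  L.IsGraded S ∧ ∀ x : Fin n → A, (∃ i, x i ∈ S) → L.bracket x ∈ S

/-- `[A,…,A,M]`: the span of all brackets with at least one entry in `M`. -/
def amul (L : NLieSuper F A n α) (M : Submodule F A) : Submodule F A :=
  Submodule.span F {z | ∃ x : Fin n → A, (∃ i, x i ∈ M) ∧ z = L.bracket x}

/-- The lower central series: `lcs 0 = A¹ = A`, `lcs s = A^{s+1} = [A,…,A,A^s]`. -/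
def lcs (L : NLieSuper F A n α) : ℕ → Submodule F A
  | 0 => ⊤
  | s + 1 => L.amul (L.lcs s)

/-- `A` is nilpotent if the lower central series reaches `0`. -/
def IsNilpotentAlg (L : NLieSuper F A n α) : Prop := ∃ v, L.lcs v = ⊥

/-- The derived subalgebra `A² = [A,…,A]`. -/
def derived (L : NLieSuper F A n α) : Submodule F A := L.lcs 1

/-- Maximal subalgebras: proper subalgebras maximal among proper subalgebras. -/
def IsMaximalSubalgebra (L : NLieSuper F A n α) (S : Submodule F A) : Prop :=
  L.IsSubalgebra S ∧ S ≠ ⊤ ∧ ∀ T, L.IsSubalgebra T → S < T → T = ⊤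

/-- The Frattini subalgebra: the intersection of all maximal subalgebras. -/
def frattini (L : NLieSuper F A n α) : Submodule F A :=
  sInf {S | L.IsMaximalSubalgebra S}

end NLieSuper

section Aux

variable {F A : Type*} [Field F] [AddCommGroup A] [Module F A]

/-- Separation helper: if the `p`-projection of `x` is not in `D` and `D` is stable under
the `p`-projection, there is a functional killing `D` and `q` but not `x`. -/
lemma helper_sep (D p q : Submodule F A) (h : IsCompl p q)
    (hD : ∀ y ∈ D, ((Submodule.linearProjOfIsCompl p q h) y : A) ∈ D)
    (x : A) (hx : ((Submodule.linearProjOfIsCompl p q h) x : A) ∉ D) :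
    ∃ ψ : A →ₗ[F] F, ψ x ≠ 0 ∧ D ≤ LinearMap.ker ψ ∧ q ≤ LinearMap.ker ψ := by
  set π := Submodule.linearProjOfIsCompl p q h with hπ
  set π' := Submodule.linearProjOfIsCompl q p h.symm with hπ'
  have hdecomp : ∀ y : A, (π y : A) + (π' y : A) = y := fun y =>
    Submodule.projection_add_projection_eq_self h y
  have hNx : (π x : A) ∉ D ⊔ q := by
    intro hmem
    rw [Submodule.mem_sup] at hmem
    obtain ⟨d, hd, w, hw, hdw⟩ := hmem
    -- apply π to both sides
    have h1 : π ((d : A) + w) = π d := by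
      have hw0 : π w = 0 := Submodule.linearProjOfIsCompl_apply_right' h hw
      rw [map_add, hw0, add_zero]
    have h3 : (π ((π x : A)) : A) = (π x : A) :=
      congrArg Subtype.val (Submodule.linearProjOfIsCompl_apply_left h (π x))
    rw [hdw] at h1
    have : (π x : A) = (π d : A) := by rw [← h3, h1]
    exact hx (this ▸ hD d hd)
  obtain ⟨ψ, hψx, hψmap⟩ := Submodule.exists_dual_map_eq_bot_of_notMem hNx inferInstance
  have hker : D ⊔ q ≤ LinearMap.ker ψ := by
    intro y hy
    have : ψ y ∈ (D ⊔ q).map ψ := Submodule.mem_map_of_mem hy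
    rw [hψmap] at this
    simpa [LinearMap.mem_ker] using this
  refine ⟨ψ, ?_, le_trans le_sup_left hker, le_trans le_sup_right hker⟩
  have hq : ψ ((π' x : A)) = 0 := hker (le_sup_right (a := D) (π' x).2)
  have : ψ x = ψ ((π x : A)) + ψ ((π' x : A)) := by
    rw [← map_add, hdecomp]
  rw [this, hq, add_zero]
  exact hψx

lemma ker_graded (p q : Submodule F A) (h : IsCompl p q) (ψ : A →ₗ[F] F)
    (hc : q ≤ LinearMap.ker ψ ∨ p ≤ LinearMap.ker ψ) :
    LinearMap.ker ψ ≤ (LinearMap.ker ψ ⊓ p) ⊔ (LinearMap.ker ψ ⊓ q) := by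
  set π := Submodule.linearProjOfIsCompl p q h with hπ
  set π' := Submodule.linearProjOfIsCompl q p h.symm with hπ'
  intro y hy
  have hdecomp : (π y : A) + (π' y : A) = y :=
    Submodule.projection_add_projection_eq_self h y
  have hsum : ψ ((π y : A)) + ψ ((π' y : A)) = 0 := by
    rw [← map_add, hdecomp]; exact hy
  have hboth : ψ ((π y : A)) = 0 ∧ ψ ((π' y : A)) = 0 := by
    rcases hc with hc | hc
    · have h1 : ψ ((π' y : A)) = 0 := hc (π' y).2
      exact ⟨by rwa [h1, add_zero] at hsum, h1⟩
    · have h1 : ψ ((π y : A)) = 0 := hc (π y).2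
      exact ⟨h1, by rwa [h1, zero_add] at hsum⟩
  have h1 : (π y : A) ∈ LinearMap.ker ψ ⊓ p := ⟨hboth.1, (π y).2⟩
  have h2 : (π' y : A) ∈ LinearMap.ker ψ ⊓ q := ⟨hboth.2, (π' y).2⟩
  rw [← hdecomp]
  exact Submodule.add_mem _ (Submodule.mem_sup_left h1) (Submodule.mem_sup_right h2)

/-- Main separation lemma: if `D` is graded w.r.t. the complementary pair `(p,q)` and
`x ∉ D`, there is a functional `ψ` with graded kernel containing `D` but not `x`. -/
lemma main_sep (D p q : Submodule F A) (h : IsCompl p q)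
    (hgr : D ≤ (D ⊓ p) ⊔ (D ⊓ q)) (x : A) (hx : x ∉ D) :
    ∃ ψ : A →ₗ[F] F, ψ x ≠ 0 ∧ D ≤ LinearMap.ker ψ ∧
      LinearMap.ker ψ ≤ (LinearMap.ker ψ ⊓ p) ⊔ (LinearMap.ker ψ ⊓ q) := by
  set π := Submodule.linearProjOfIsCompl p q h with hπ
  set π' := Submodule.linearProjOfIsCompl q p h.symm with hπ'
  have hdecomp : ∀ y : A, (π y : A) + (π' y : A) = y := fun y =>
    Submodule.projection_add_projection_eq_self h y
  -- D is stable under both projections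
  have hDπ : ∀ y ∈ D, (π y : A) ∈ D ∧ (π' y : A) ∈ D := by
    intro y hy
    obtain ⟨u, hu, v, hv, huv⟩ := Submodule.mem_sup.mp (hgr hy)
    have hπy : (π y : A) = u := by
      have : π y = π (u + v) := by rw [huv]
      rw [map_add] at this
      have h1 : π u = ⟨u, hu.2⟩ := Submodule.linearProjOfIsCompl_apply_left h ⟨u, hu.2⟩
      have h2 : π v = 0 := Submodule.linearProjOfIsCompl_apply_right' h hv.2
      rw [h1, h2, add_zero] at this
      exact congrArg Subtype.val this
    have hπ'y : (π' y : A) = v := by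
      have hd := hdecomp y
      rw [hπy] at hd
      exact (add_left_cancel (huv.trans hd.symm)).symm
    exact ⟨hπy ▸ hu.1, hπ'y ▸ hv.1⟩
  by_cases hcase : (π x : A) ∈ D
  · -- then π' x ∉ D
    have hx' : (π' x : A) ∉ D := by
      intro hmem
      exact hx (by rw [← hdecomp x]; exact Submodule.add_mem _ hcase hmem)
    obtain ⟨ψ, h1, h2, h3⟩ := helper_sep D q p h.symm (fun y hy => (hDπ y hy).2) x hx'
    exact ⟨ψ, h1, h2, ker_graded p q h ψ (Or.inr h3)⟩
  · obtain ⟨ψ, h1, h2, h3⟩ := helper_sep D p q h (fun y hy => (hDπ y hy).1) x hcase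
    exact ⟨ψ, h1, h2, ker_graded p q h ψ (Or.inl h3)⟩

end Aux

namespace NLieSuper

variable {F A : Type*} [Field F] [AddCommGroup A] [Module F A] {n : ℕ} {α : ZMod 2}

lemma isCompl_grading (L : NLieSuper F A n α) : IsCompl (L.grading 0) (L.grading 1) := by
  constructor
  · exact L.internal.submodule_iSupIndep.pairwiseDisjoint (by decide : (0 : ZMod 2) ≠ 1)
  · rw [codisjoint_iff, eq_top_iff, ← L.internal.submodule_iSup_eq_top]
    refine iSup_le fun i => ?_
    rcases (by decide : ∀ i : ZMod 2, i = 0 ∨ i = 1) i with rfl | rfl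
    · exact le_sup_left
    · exact le_sup_right

lemma bracket_mem_derived (hn : 2 ≤ n) (L : NLieSuper F A n α) (x : Fin n → A) :
    L.bracket x ∈ L.derived := by
  show L.bracket x ∈ L.amul ⊤
  exact Submodule.subset_span ⟨x, ⟨⟨0, by omega⟩, Submodule.mem_top⟩, rfl⟩

lemma derived_graded (hn : 2 ≤ n) (L : NLieSuper F A n α) :
    L.derived ≤ (L.derived ⊓ L.grading 0) ⊔ (L.derived ⊓ L.grading 1) := by
  have hc := L.isCompl_grading
  set π := Submodule.linearProjOfIsCompl (L.grading 0) (L.grading 1) hc with hπdef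
  set π' := Submodule.linearProjOfIsCompl (L.grading 1) (L.grading 0) hc.symm with hπ'def
  show L.amul ⊤ ≤ _
  rw [amul, Submodule.span_le]
  rintro z ⟨x, -, rfl⟩
  set m : Fin n → A := fun i => (π (x i) : A) with hm
  set m' : Fin n → A := fun i => (π' (x i) : A) with hm'
  have hxmm : x = m + m' := funext fun i =>
    (Submodule.projection_add_projection_eq_self hc (x i)).symm
  rw [hxmm, MultilinearMap.map_add_univ]
  apply Submodule.sum_mem
  intro s _
  set g : Fin n → ZMod 2 := fun i => if i ∈ s then 0 else 1 with hg
  have hmem : ∀ i, (s.piecewise m m') i ∈ L.grading (g i) := by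
    intro i
    by_cases hi : i ∈ s
    · rw [Finset.piecewise_eq_of_mem _ _ _ hi]
      simp only [hg, if_pos hi]
      exact (π (x i)).2
    · rw [Finset.piecewise_eq_of_notMem _ _ _ hi]
      simp only [hg, if_neg hi]
      exact (π' (x i)).2
  have h1 := L.bracket_grade _ g hmem
  have h2 : L.bracket (s.piecewise m m') ∈ L.derived := bracket_mem_derived hn L _
  rcases (by decide : ∀ t : ZMod 2, t = 0 ∨ t = 1) (α + ∑ i, g i) with h | h
  · exact Submodule.mem_sup_left ⟨h2, h ▸ h1⟩
  · exact Submodule.mem_sup_right ⟨h2, h ▸ h1⟩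

end NLieSuper

/-- The Frattini subalgebra of a finite-dimensional `n`-Lie superalgebra is contained in
the derived subalgebra `A² = [A,…,A]`; in particular if `A` is abelian then `F(A) = 0`. -/
theorem frattini_le_derived {F A : Type*} [Field F] [AddCommGroup A] [Module F A]
    [FiniteDimensional F A] {n : ℕ} (hn : 2 ≤ n) {α : ZMod 2} (L : NLieSuper F A n α) :
    L.frattini ≤ L.derived ∧ (L.derived = ⊥ → L.frattini = ⊥) := by
  have hc := L.isCompl_grading
  have main : L.frattini ≤ L.derived := by
    intro x hx
    by_contra hxD
    obtain ⟨ψ, hψx, hψD, hψgr⟩ :=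
      main_sep L.derived (L.grading 0) (L.grading 1) hc (NLieSuper.derived_graded hn L) x hxD
    have hsub : L.IsSubalgebra (LinearMap.ker ψ) :=
      ⟨hψgr, fun z _ => hψD (NLieSuper.bracket_mem_derived hn L z)⟩
    have hne : (LinearMap.ker ψ) ≠ ⊤ := by
      intro h
      exact hψx (LinearMap.mem_ker.mp (h ▸ Submodule.mem_top : x ∈ LinearMap.ker ψ))
    have hmax : ∀ T, L.IsSubalgebra T → LinearMap.ker ψ < T → T = ⊤ := by
      intro T _ hlt
      obtain ⟨t, htT, htker⟩ := SetLike.exists_of_lt hlt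
      have hψt : ψ t ≠ 0 := fun h0 => htker (LinearMap.mem_ker.mpr h0)
      rw [eq_top_iff]
      intro a _
      have hker : a - (ψ a / ψ t) • t ∈ LinearMap.ker ψ := by
        rw [LinearMap.mem_ker, map_sub, map_smul, smul_eq_mul, div_mul_cancel₀ _ hψt, sub_self]
      have h1 : a - (ψ a / ψ t) • t ∈ T := hlt.le hker
      have h2 := T.add_mem h1 (T.smul_mem (ψ a / ψ t) htT)
      simpa using h2
    have hM : L.IsMaximalSubalgebra (LinearMap.ker ψ) := ⟨hsub, hne, hmax⟩
    have hfr : L.frattini ≤ LinearMap.ker ψ := sInf_le hM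
    exact hψx (LinearMap.mem_ker.mp (hfr hx))
  exact ⟨main, fun h => le_bot_iff.mp (h ▸ main)⟩
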